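/- Let n be an odd integer with n ≥ 3. Then the polynomial r^n − n·r + n − 1 has exactly one real root r₀ different from 1; moreover r₀ < −1, r₀ is a simple root (its multiplicity equals 1), and every non-real complex root z of r^n − n·r + n − 1 satisfies |z| < −r₀. -/

import Mathlib

set_option maxHeartbeats 1000000

open Polynomial

private lemma hasDerivAt_char (n : ℕ) (x : ℝ) :
    HasDerivAt (fun r : ℝ => r ^ n - (n : ℝ) * r + (n : ℝ) - 1)
      ((n : ℝ) * x ^ (n - 1) - n) x := by
  have h := (((hasDerivAt_pow n x).sub
      ((hasDerivAt_id x).const_mul (n : ℝ))).add_const (n : ℝ)).sub_const 1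
  simpa using h

/-- For odd `n ≥ 3`, the polynomial `r^n − n·r + n − 1` has exactly one real root `r₀`
different from `1`; moreover `r₀ < −1`, `r₀` is a simple root, and every non-real
complex root `z` satisfies `|z| < −r₀`. -/
theorem real_root_of_characteristic_odd
    (n : ℕ) (hn : 3 ≤ n) (hodd : Odd n) :
    ∃ r₀ : ℝ, r₀ ≠ 1 ∧ r₀ ^ n - (n : ℝ) * r₀ + (n : ℝ) - 1 = 0 ∧
      (∀ r : ℝ, r ≠ 1 → r ^ n - (n : ℝ) * r + (n : ℝ) - 1 = 0 → r = r₀) ∧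
      r₀ < -1 ∧
      ((X ^ n - C (n : ℝ) * X + C ((n : ℝ) - 1)).rootMultiplicity r₀ = 1) ∧
      (∀ z : ℂ, z.im ≠ 0 → z ^ n - (n : ℂ) * z + (n : ℂ) - 1 = 0 →
        ‖z‖ < -r₀) := by
  set f : ℝ → ℝ := fun r => r ^ n - (n : ℝ) * r + (n : ℝ) - 1 with hf
  have hn3 : (3 : ℝ) ≤ (n : ℝ) := by exact_mod_cast hn
  have hn1 : n - 1 ≠ 0 := by omega
  have heven : Even (n - 1) := Nat.Odd.sub_odd hodd odd_one
  have hcont : Continuous f := by fun_prop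
  -- values
  have hfneg1 : f (-1) = 2 * n - 2 := by
    simp only [hf, hodd.neg_one_pow]; ring
  have hf1 : f 1 = 0 := by simp [hf]
  -- monotonicity on (-∞, -1]
  have hmono1 : StrictMonoOn f (Set.Iic (-1 : ℝ)) := by
    apply strictMonoOn_of_deriv_pos (convex_Iic _) hcont.continuousOn
    intro x hx
    rw [interior_Iic, Set.mem_Iio] at hx
    rw [(hasDerivAt_char n x).deriv]
    have h1 : (1 : ℝ) < |x| := by rw [abs_of_neg (by linarith)]; linarith
    have : (1 : ℝ) < x ^ (n - 1) := by
      calc (1:ℝ) < |x| ^ (n-1) := one_lt_pow₀ h1 hn1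
        _ = x ^ (n-1) := heven.pow_abs x
    nlinarith
  -- anti on [-1,1]
  have hanti : StrictAntiOn f (Set.Icc (-1 : ℝ) 1) := by
    apply strictAntiOn_of_deriv_neg (convex_Icc _ _) hcont.continuousOn
    intro x hx
    rw [interior_Icc, Set.mem_Ioo] at hx
    rw [(hasDerivAt_char n x).deriv]
    have h1 : |x| < 1 := abs_lt.2 ⟨hx.1, hx.2⟩
    have : x ^ (n - 1) < 1 := by
      calc x ^ (n-1) = |x| ^ (n-1) := (heven.pow_abs x).symm
        _ < 1 := pow_lt_one₀ (abs_nonneg x) h1 hn1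
    nlinarith
  -- mono on [1, ∞)
  have hmono2 : StrictMonoOn f (Set.Ici (1 : ℝ)) := by
    apply strictMonoOn_of_deriv_pos (convex_Ici _) hcont.continuousOn
    intro x hx
    rw [interior_Ici, Set.mem_Ioi] at hx
    rw [(hasDerivAt_char n x).deriv]
    have : (1 : ℝ) < x ^ (n - 1) := one_lt_pow₀ hx hn1
    nlinarith
  -- existence of root in [-n, -1]
  have hfn : f (-(n : ℝ)) ≤ 0 := by
    have h3 : (n : ℝ) ^ 3 ≤ (n : ℝ) ^ n := pow_le_pow_right₀ (by linarith) hn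
    have hneg : (-(n:ℝ)) ^ n = -((n:ℝ) ^ n) := hodd.neg_pow _
    have h4 : 3 * (n:ℝ)^2 ≤ (n:ℝ)^3 := by nlinarith [sq_nonneg (n:ℝ)]
    have h5 : (n:ℝ) ≤ (n:ℝ)^2 := by nlinarith
    simp only [hf, hneg]
    nlinarith [h3, h4, h5]
  have hiv : ∃ x ∈ Set.Icc (-(n : ℝ)) (-1), f x = 0 := by
    have hsub : Set.Icc (f (-(n:ℝ))) (f (-1)) ⊆ f '' Set.Icc (-(n:ℝ)) (-1) :=
      intermediate_value_Icc (by linarith) hcont.continuousOn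
    have h0 : (0 : ℝ) ∈ Set.Icc (f (-(n:ℝ))) (f (-1)) := ⟨hfn, by rw [hfneg1]; linarith⟩
    obtain ⟨x, hx, hx0⟩ := hsub h0
    exact ⟨x, hx, hx0⟩
  obtain ⟨r₀, ⟨hr₀l, hr₀u⟩, hroot⟩ := hiv
  have hroot' : r₀ ^ n - (n : ℝ) * r₀ + (n : ℝ) - 1 = 0 := hroot
  have hr₀ne : r₀ ≠ -1 := by
    intro h; rw [h, hfneg1] at hroot; linarith
  have hr₀lt : r₀ < -1 := lt_of_le_of_ne hr₀u hr₀ne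
  have hr₀ne1 : r₀ ≠ 1 := by linarith
  -- uniqueness
  have huniq : ∀ r : ℝ, r ≠ 1 → f r = 0 → r = r₀ := by
    intro r hr1 hr
    rcases le_or_gt r (-1) with h | h
    · exact hmono1.injOn h (le_of_lt hr₀lt) (by rw [hr, hroot])
    · rcases lt_trichotomy r 1 with h1 | h1 | h1
      · have := hanti ⟨le_of_lt h, le_of_lt h1⟩ ⟨by norm_num, le_refl 1⟩ h1
        rw [hf1, hr] at this; linarith
      · exact absurd h1 hr1
      · have := hmono2 (Set.self_mem_Ici) (le_of_lt h1) h1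
        rw [hf1, hr] at this; linarith
  refine ⟨r₀, hr₀ne1, hroot, huniq, hr₀lt, ?_, ?_⟩
  · -- root multiplicity
    set P : ℝ[X] := X ^ n - C (n : ℝ) * X + C ((n : ℝ) - 1) with hP
    have hPeval : ∀ x : ℝ, P.eval x = f x := by
      intro x; simp [hP, hf]; ring
    have hPne : P ≠ 0 := by
      intro h
      have := hPeval 1
      rw [h] at this
      simp [hf1] at this
      have := hPeval (-1)
      rw [h] at this
      simp [hfneg1] at this
      linarith
    have hProot : P.IsRoot r₀ := by rw [IsRoot, hPeval]; exact hroot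
    have hder : P.derivative = C (n : ℝ) * X ^ (n - 1) - C (n : ℝ) := by
      simp [hP, derivative_X_pow]
    have hderne : ¬ P.derivative.IsRoot r₀ := by
      rw [IsRoot, hder]
      simp only [eval_sub, eval_mul, eval_C, eval_pow, eval_X]
      have h1 : (1 : ℝ) < |r₀| := by rw [abs_of_neg (by linarith)]; linarith
      have : (1 : ℝ) < r₀ ^ (n - 1) := by
        calc (1:ℝ) < |r₀| ^ (n-1) := one_lt_pow₀ h1 hn1
          _ = r₀ ^ (n-1) := heven.pow_abs r₀
      nlinarith
    have h1le : 1 ≤ P.rootMultiplicity r₀ := (rootMultiplicity_pos hPne).2 hProot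
    have hle1 : ¬ 1 < P.rootMultiplicity r₀ := by
      rw [one_lt_rootMultiplicity_iff_isRoot hPne]
      rintro ⟨-, h2⟩; exact hderne h2
    omega
  · -- complex roots
    intro z him hz
    set t : ℝ := ‖z‖ with ht
    have htx : |z.re| < t := (Complex.abs_re_lt_norm).2 him
    have ht2 : z.re ^ 2 + z.im ^ 2 = t ^ 2 := by
      rw [ht, Complex.sq_norm, Complex.normSq_apply]; ring
    have hzn : z ^ n = (n : ℂ) * z - ((n : ℂ) - 1) := by linear_combination hz
    -- strict bound on |z^n|
    have hkey : t ^ n < (n : ℝ) * t + ((n : ℝ) - 1) := by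
      have hb : (0 : ℝ) ≤ (n : ℝ) * t + ((n : ℝ) - 1) := by
        have : 0 ≤ t := norm_nonneg z
        nlinarith
      refine lt_of_pow_lt_pow_left₀ 2 hb ?_
      have h1 : (t ^ n) ^ 2 = Complex.normSq (z ^ n) := by
        rw [ht, ← norm_pow, Complex.sq_norm]
      rw [h1, hzn]
      have hre : ((n : ℂ) * z - ((n : ℂ) - 1)).re = (n : ℝ) * z.re - ((n : ℝ) - 1) := by
        simp
      have him' : ((n : ℂ) * z - ((n : ℂ) - 1)).im = (n : ℝ) * z.im := by simp
      rw [Complex.normSq_apply, hre, him']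
      have hsq : ((n:ℝ)*z.re)^2 + ((n:ℝ)*z.im)^2 = ((n:ℝ)*t)^2 := by
        linear_combination (n:ℝ)^2 * ht2
      have hxr : -z.re < t := by
        have := neg_abs_le z.re; linarith [abs_lt.1 htx]
      have hpos : (0 : ℝ) < t + z.re := by linarith
      nlinarith [hsq, mul_pos (mul_pos (by linarith : (0:ℝ) < (n:ℝ)) (by linarith : (0:ℝ) < (n:ℝ) - 1)) hpos]
    -- conclude via monotonicity
    by_contra hcon
    push_neg at hcon
    have h1r : (1 : ℝ) ≤ -r₀ := by linarith
    have hft : f (-r₀) ≤ f t := by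
      rcases eq_or_lt_of_le hcon with h | h
      · rw [h]
      · exact le_of_lt (hmono2 (Set.mem_Ici.2 h1r) (Set.mem_Ici.2 (by linarith)) h)
    have hfr : f (-r₀) = 2 * (n : ℝ) - 2 := by
      show (-r₀) ^ n - (n : ℝ) * (-r₀) + (n : ℝ) - 1 = _
      rw [hodd.neg_pow r₀]
      linarith [hroot']
    have : f t < 2 * (n : ℝ) - 2 := by
      show t ^ n - (n:ℝ) * t + (n:ℝ) - 1 < _
      linarith
    rw [hfr] at hft
    linarith
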